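/- arXiv:2511.21628 — 2 statements merged into one kernel-verified Lean document; each statement's English description precedes it below -/
import Mathlib

section
/- Let s,ℓ,c be positive integers with c+ℓ=s and n=3s-ℓ=2ℓ+3c. Let F ⊆ 2^[n] be a shifted family with ν(F) < s. Suppose d(F) ≥ d, where d ≤ c+1 and d is odd. If ν(F ∩ ([2ℓ+d, n] choose 3)) ≥ c−d+1, then y_F(3) ≥ (2ℓ+d−1)(2d−3). -/
open Finset

/-- The ground set `[n] = {1, 2, …, n}`. -/
def ground (n : ℕ) : Finset ℕ := Finset.Icc 1 n

-- The matching number `ν(F)` of a family: the size of the largest pairwise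
-- disjoint subfamily of `F`.
open Classical in
noncomputable def matchingNumber (F : Finset (Finset ℕ)) : ℕ :=
  (F.powerset.filter fun M : Finset (Finset ℕ) =>
      (M : Set (Finset ℕ)).Pairwise fun A B => Disjoint A B).sup Finset.card

-- `e(n, s)`: the maximum size of a family `F ⊆ 2^[n]` with `ν(F) < s`.
open Classical in
noncomputable def extremalNumber (n s : ℕ) : ℕ :=
  (((ground n).powerset.powerset).filter fun F => matchingNumber F < s).sup Finset.card

/-- The family `P(s, ℓ) = {P ⊆ [n] : |P| + |P ∩ [ℓ-1]| ≥ 3}` (it depends only on `n, ℓ`). -/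
def famP (n l : ℕ) : Finset (Finset ℕ) :=
  (ground n).powerset.filter fun A => 3 ≤ A.card + (A ∩ Finset.Icc 1 (l - 1)).card

/-- The family `P'(s, ℓ)`: all subsets of `[n]` of size at least `3` together with
all `2`-element subsets of `[2ℓ-1]`. -/
def famP' (n l : ℕ) : Finset (Finset ℕ) :=
  ((ground n).powerset.filter fun A => 3 ≤ A.card) ∪
    (Finset.Icc 1 (2 * l - 1)).powersetCard 2

/-- The family `Q(s, ℓ)`: all subsets of `[n]` of size at least `3` together with all
`2`-element subsets of `[s+ℓ-1]`, with all `3`-element subsets of `[s+ℓ, n]` removed. -/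
def famQ (n s l : ℕ) : Finset (Finset ℕ) :=
  (((ground n).powerset.filter fun A => 3 ≤ A.card) ∪
      (Finset.Icc 1 (s + l - 1)).powersetCard 2) \
    (Finset.Icc (s + l) n).powersetCard 3

/-- The family `W(s, ℓ) = {P ⊆ [n] : |P ∩ [2s-1]| ≥ 2}`. -/
def famW (n s : ℕ) : Finset (Finset ℕ) :=
  (ground n).powerset.filter fun A => 2 ≤ (A ∩ Finset.Icc 1 (2 * s - 1)).card

/-- The `(i ← j)`-shift of a set. -/
def shiftSet (i j : ℕ) (A : Finset ℕ) : Finset ℕ :=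
  if j ∈ A ∧ i ∉ A then insert i (A.erase j) else A

/-- The `(i ← j)`-shift of a family. -/
def shiftFam (i j : ℕ) (F : Finset (Finset ℕ)) : Finset (Finset ℕ) :=
  F.image (shiftSet i j) ∪ F.filter fun A => shiftSet i j A ∈ F

/-- A family `F ⊆ 2^[n]` is shifted if it is invariant under all `(i ← j)`-shifts
with `1 ≤ i < j ≤ n`. -/
def IsShifted (n : ℕ) (F : Finset (Finset ℕ)) : Prop :=
  ∀ i j : ℕ, 1 ≤ i → i < j → j ≤ n → shiftFam i j F = F

/-- `A` can be shifted to `B`: some sequence of `(a ← b)`-shifts with `a < b`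
transforms `A` into `B`. -/
def ShiftsTo (n : ℕ) (A B : Finset ℕ) : Prop :=
  Relation.ReflTransGen
    (fun X Y => ∃ a b : ℕ, 1 ≤ a ∧ a < b ∧ b ≤ n ∧ Y = shiftSet a b X) A B

/-- A family `F ⊆ 2^[n]` is an up-set if it is closed under supersets inside `[n]`. -/
def IsUpSet (n : ℕ) (F : Finset (Finset ℕ)) : Prop :=
  ∀ A ∈ F, ∀ B : Finset ℕ, A ⊆ B → B ⊆ ground n → B ∈ F

/-- The `k`-th layer of a family: its `k`-element members (as subsets of `[n]`). -/
def layer (n : ℕ) (F : Finset (Finset ℕ)) (k : ℕ) : Finset (Finset ℕ) :=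
  F ∩ (ground n).powersetCard k

/-- `y_F(k)`: the number of `k`-element subsets of `[n]` that do not belong to `F`. -/
def yF (n : ℕ) (F : Finset (Finset ℕ)) (k : ℕ) : ℕ :=
  Nat.choose n k - (layer n F k).card

/-- The defining condition for `d(F)` (with parameter `ℓ`). -/
def DCond (l : ℕ) (F : Finset (Finset ℕ)) (d : ℕ) : Prop :=
  (Even d ∧ ∃ i ∈ Finset.Icc 1 (l + d / 2), ({i, 2 * l + d + 1 - i} : Finset ℕ) ∉ F) ∨
  (Odd d ∧ (({1, 2 * l + d} : Finset ℕ) ∉ F ∨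
    ∃ i ∈ Finset.Icc 3 (l + (d + 1) / 2), ({i, 2 * l + d + 2 - i} : Finset ℕ) ∉ F))

/-- `d(F)`: the smallest `d ≥ 0` satisfying the condition `DCond ℓ F d`. -/
noncomputable def dF (l : ℕ) (F : Finset (Finset ℕ)) : ℕ := sInf {d : ℕ | DCond l F d}

-- ===================== Section 1 : matchingNumber =====================

lemma matchingNumber_ge (F M : Finset (Finset ℕ)) (hM : M ⊆ F)
    (hdisj : (M : Set (Finset ℕ)).Pairwise fun A B => Disjoint A B) :
    M.card ≤ matchingNumber F := by
  classical
  unfold matchingNumber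
  apply Finset.le_sup (f := Finset.card)
  simp only [Finset.mem_filter, Finset.mem_powerset]
  refine ⟨hM, ?_⟩
  convert hdisj

lemma exists_matching (F : Finset (Finset ℕ)) (k : ℕ) (hk : 0 < k)
    (h : k ≤ matchingNumber F) :
    ∃ M : Finset (Finset ℕ), M ⊆ F ∧
      ((M : Set (Finset ℕ)).Pairwise fun A B => Disjoint A B) ∧ M.card = k := by
  classical
  unfold matchingNumber at h
  rw [Finset.le_sup_iff hk] at h
  obtain ⟨M, hM, hMk⟩ := h
  simp only [Finset.mem_filter, Finset.mem_powerset] at hM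
  obtain ⟨M', hM's, hM'c⟩ := Finset.exists_subset_card_eq (s := M) hMk
  exact ⟨M', hM's.trans hM.1, hM.2.mono (Finset.coe_subset.mpr hM's), hM'c⟩

-- ===================== Section 2 : shift =====================

lemma mem_shift {n : ℕ} {F : Finset (Finset ℕ)} (hsh : IsShifted n F)
    {A : Finset ℕ} (hA : A ∈ F) {x y : ℕ} (hy : 1 ≤ y) (hyx : y < x) (hx : x ≤ n)
    (hxA : x ∈ A) (hyA : y ∉ A) : insert y (A.erase x) ∈ F := by
  have h := hsh y x hy hyx hx
  have : shiftSet y x A ∈ shiftFam y x F := by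
    unfold shiftFam
    exact Finset.mem_union_left _ (Finset.mem_image_of_mem _ hA)
  rw [h] at this
  unfold shiftSet at this
  rwa [if_pos ⟨hxA, hyA⟩] at this


lemma downclosed_eq_Icc (S : Finset ℕ) (h0 : 0 ∉ S)
    (hdc : ∀ x ∈ S, ∀ y, 1 ≤ y → y ≤ x → y ∈ S) : S = Finset.Icc 1 S.card := by
  rcases S.eq_empty_or_nonempty with h | h
  · simp [h]
  · have hM := S.max'_mem h
    have h2 : S = Finset.Icc 1 (S.max' h) := by
      apply Finset.Subset.antisymm
      · intro x hx
        rw [Finset.mem_Icc]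
        have : x ≠ 0 := fun hc => h0 (hc ▸ hx)
        exact ⟨Nat.one_le_iff_ne_zero.mpr this, S.le_max' x hx⟩
      · intro y hy
        rw [Finset.mem_Icc] at hy
        exact hdc _ hM y hy.1 hy.2
    rw [h2, Nat.card_Icc] at *
    simpa using h2

lemma AR1 (l t r k N mr : ℕ) (hl : 1 ≤ l) (ht : 1 ≤ t) (hr : 1 ≤ r) (hrk : r ≤ k)
    (hkt : k ≤ t) (hN : N = 2*l+2*t) (hm : mr + r ≤ l+t+k) :
    (r-1)*N + (2*t+1-r)*mr ≤ N*(2*t-1) := by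
  zify [hr, show r ≤ 2*t+1 by omega, show 1 ≤ 2*t by omega]
  have h1 : (mr:ℤ) + r ≤ l+t+k := by exact_mod_cast hm
  have h2 : (N:ℤ) = 2*l+2*t := by exact_mod_cast hN
  have h3 : (r:ℤ) ≤ k := by exact_mod_cast hrk
  have h4 : (k:ℤ) ≤ t := by exact_mod_cast hkt
  have h5 : (1:ℤ) ≤ l := by exact_mod_cast hl
  have h6 : (1:ℤ) ≤ r := by exact_mod_cast hr
  nlinarith [mul_nonneg (show (0:ℤ) ≤ 2*(t:ℤ)-1-(2*t-r) by omega) (show (0:ℤ) ≤ 2*(t:ℤ)-r by omega),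
    mul_nonneg (show (0:ℤ) ≤ (l:ℤ)-1 by omega) (show (0:ℤ) ≤ 2*(t:ℤ)-r-1 by omega),
    mul_le_mul_of_nonneg_left (show (mr:ℤ) ≤ l+t+k-r by omega) (show (0:ℤ) ≤ 2*(t:ℤ)+1-r by omega)]

lemma AR2 (l t k N mw : ℕ) (hl : 1 ≤ l) (ht : 1 ≤ t) (hk : 1 ≤ k) (hkt : k ≤ t)
    (hN : N = 2*l+2*t) (hm : mw + 1 ≤ k) :
    (2*t+1-k-1)*N + k*mw ≤ N*(2*t-1) := by
  zify [show k ≤ 2*t+1 by omega, show 1 ≤ 2*t+1-k by omega, show 1 ≤ 2*t by omega]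
  have h1 : (mw:ℤ) + 1 ≤ k := by exact_mod_cast hm
  have h2 : (N:ℤ) = 2*l+2*t := by exact_mod_cast hN
  have h4 : (k:ℤ) ≤ t := by exact_mod_cast hkt
  have h5 : (1:ℤ) ≤ l := by exact_mod_cast hl
  have h6 : (1:ℤ) ≤ k := by exact_mod_cast hk
  nlinarith [mul_le_mul_of_nonneg_left (show (mw:ℤ) ≤ k-1 by omega) (show (0:ℤ) ≤ (k:ℤ) by omega),
    mul_nonneg (show (0:ℤ) ≤ (N:ℤ)-k by omega) (show (0:ℤ) ≤ (k:ℤ)-1 by omega)]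

lemma AR3 (l t r k N mr mw : ℕ) (hl : 1 ≤ l) (ht : 1 ≤ t) (hr : 1 ≤ r) (hrk : r ≤ k)
    (hkt : k ≤ t) (hN : N = 2*l+2*t) (hs : mr + mw + r ≤ N + k) (hwr : mw ≤ mr)
    (hmrN : mr ≤ N) :
    (r-1)*N + (2*t+1-k-r)*mr + k*mw ≤ N*(2*t-1) := by
  zify [hr, show r ≤ 2*t+1-k by omega, show k ≤ 2*t+1 by omega, show 1 ≤ 2*t by omega]
  have h1 : (mr:ℤ) + mw + r ≤ N + k := by exact_mod_cast hs
  have h2 : (N:ℤ) = 2*l+2*t := by exact_mod_cast hN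
  have h3 : (r:ℤ) ≤ k := by exact_mod_cast hrk
  have h4 : (k:ℤ) ≤ t := by exact_mod_cast hkt
  have h5 : (1:ℤ) ≤ l := by exact_mod_cast hl
  have h6 : (1:ℤ) ≤ r := by exact_mod_cast hr
  have h7 : (mw:ℤ) ≤ mr := by exact_mod_cast hwr
  have h8 : (mr:ℤ) ≤ N := by exact_mod_cast hmrN
  have h9 : (0:ℤ) ≤ mw := by positivity
  rcases le_or_gt (2*k+r) (2*t+1) with hc | hc
  · have hc' : 2*(k:ℤ)+r ≤ 2*t+1 := by exact_mod_cast hc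
    nlinarith [mul_nonneg (show (0:ℤ) ≤ (N:ℤ)+k-r-mr-mw by omega) (show (0:ℤ) ≤ (k:ℤ) by omega),
      mul_nonneg (show (0:ℤ) ≤ (N:ℤ)-mr by omega) (show (0:ℤ) ≤ 2*(t:ℤ)+1-k-r-k by omega),
      mul_nonneg (show (0:ℤ) ≤ (N:ℤ)-k by omega) (show (0:ℤ) ≤ (k:ℤ)-1 by omega),
      mul_nonneg (show (0:ℤ) ≤ (k:ℤ)-r by omega) (show (0:ℤ) ≤ (k:ℤ) by omega)]
  · have hc' : 2*(t:ℤ)+1 < 2*k+r := by exact_mod_cast hc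
    nlinarith [mul_nonneg (show (0:ℤ) ≤ 2*(k:ℤ)+r-2*t-1 by omega) (show (0:ℤ) ≤ (mr:ℤ)-mw by omega),
      mul_nonneg (show (0:ℤ) ≤ (N:ℤ)+k-r-mr-mw by omega) (show (0:ℤ) ≤ 2*(t:ℤ)+1-r by omega),
      mul_nonneg (show (0:ℤ) ≤ 2*(t:ℤ)-r-1 by omega) (show (0:ℤ) ≤ (k:ℤ)-r by omega),
      mul_nonneg (show (0:ℤ) ≤ (l:ℤ)-1 by omega) (show (0:ℤ) ≤ 2*(t:ℤ)-r-1 by omega),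
      mul_nonneg (show (0:ℤ) ≤ (t:ℤ)-k by omega) (show (0:ℤ) ≤ (k:ℤ)-r by omega)]

-- bound a sum of an antitone ℕ-function by splitting [1, 2t] at r and w
lemma sum_split_bound (m : ℕ → ℕ) (t N r w : ℕ)
    (mmono : ∀ v v', 1 ≤ v → v ≤ v' → m v' ≤ m v) (mle : ∀ v, m v ≤ N)
    (hr : 1 ≤ r) (hrw : r ≤ w) (hw : w ≤ 2*t+1) :
    ∑ v ∈ Finset.Icc 1 (2*t), m v ≤ (r-1)*N + (w-r)*(m r) + (2*t+1-w)*(m w) := by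
  have hsplit : Finset.Icc 1 (2*t) = Finset.Icc 1 (r-1) ∪ Finset.Icc r (w-1) ∪ Finset.Icc w (2*t) := by
    ext x; simp only [Finset.mem_union, Finset.mem_Icc]; omega
  rw [hsplit]
  have d1 : Disjoint (Finset.Icc 1 (r-1) ∪ Finset.Icc r (w-1)) (Finset.Icc w (2*t)) := by
    simp only [Finset.disjoint_left, Finset.mem_union, Finset.mem_Icc]; omega
  have d2 : Disjoint (Finset.Icc 1 (r-1)) (Finset.Icc r (w-1)) := by
    simp only [Finset.disjoint_left, Finset.mem_Icc]; omega
  rw [Finset.sum_union d1, Finset.sum_union d2]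
  have b1 : ∑ v ∈ Finset.Icc 1 (r-1), m v ≤ (r-1)*N := by
    calc ∑ v ∈ Finset.Icc 1 (r-1), m v ≤ ∑ v ∈ Finset.Icc 1 (r-1), N :=
          Finset.sum_le_sum (fun v _ => mle v)
      _ = (r-1)*N := by rw [Finset.sum_const, smul_eq_mul, Nat.card_Icc]; try congr 1; try omega
  have b2 : ∑ v ∈ Finset.Icc r (w-1), m v ≤ (w-r)*(m r) := by
    calc ∑ v ∈ Finset.Icc r (w-1), m v ≤ ∑ v ∈ Finset.Icc r (w-1), m r := by
          apply Finset.sum_le_sum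
          intro v hv; rw [Finset.mem_Icc] at hv; exact mmono r v hr hv.1
      _ = (w-r)*(m r) := by rw [Finset.sum_const, smul_eq_mul, Nat.card_Icc]; try congr 1; try omega
  have b3 : ∑ v ∈ Finset.Icc w (2*t), m v ≤ (2*t+1-w)*(m w) := by
    calc ∑ v ∈ Finset.Icc w (2*t), m v ≤ ∑ v ∈ Finset.Icc w (2*t), m w := by
          apply Finset.sum_le_sum
          intro v hv; rw [Finset.mem_Icc] at hv; exact mmono w v (by omega) hv.1
      _ = (2*t+1-w)*(m w) := by rw [Finset.sum_const, smul_eq_mul, Nat.card_Icc]; try congr 1; try omega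
  omega

/-- Key selection lemma: if a monotone non-increasing `φ : [1,N] → [0,2t]` has
sum exceeding `N(2t-1)`, one can select `i₁ < ... < i_t ≤ l+t` with
`φ(N+1-i_k) ≥ k` and `φ(i_k) ≥ 2t+1-k`. -/
lemma lemmaA (t l N : ℕ) (ht : 1 ≤ t) (hl : 1 ≤ l) (hN : N = 2*l+2*t)
    (φ : ℕ → ℕ) (mono : ∀ x y, 1 ≤ x → x ≤ y → y ≤ N → φ y ≤ φ x)
    (bd : ∀ x, 1 ≤ x → x ≤ N → φ x ≤ 2*t)
    (hsum : N*(2*t-1) < ∑ x ∈ Finset.Icc 1 N, φ x) :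
    ∃ f : ℕ → ℕ, StrictMono f ∧
      ∀ k, 1 ≤ k → k ≤ t → 1 ≤ f k ∧ f k ≤ l+t ∧ k ≤ φ (N+1 - f k) ∧ 2*t+1-k ≤ φ (f k) := by
  classical
  set m : ℕ → ℕ := fun v => ((Finset.Icc 1 N).filter (fun x => v ≤ φ x)).card with hm
  -- basic facts about m
  have mIcc : ∀ v, ((Finset.Icc 1 N).filter (fun x => v ≤ φ x)) = Finset.Icc 1 (m v) := by
    intro v
    apply downclosed_eq_Icc
    · simp
    · intro x hx y hy1 hyx
      simp only [Finset.mem_filter, Finset.mem_Icc] at hx ⊢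
      exact ⟨⟨hy1, le_trans hyx hx.1.2⟩, le_trans hx.2 (mono y x hy1 hyx hx.1.2)⟩
  have mle : ∀ v, m v ≤ N := by
    intro v
    calc m v ≤ (Finset.Icc 1 N).card := Finset.card_filter_le _ _
      _ = N := by rw [Nat.card_Icc]; omega
  have mmono : ∀ v v', 1 ≤ v → v ≤ v' → m v' ≤ m v := by
    intro v v' _ hvv'
    apply Finset.card_le_card
    intro x hx
    simp only [Finset.mem_filter] at hx ⊢
    exact ⟨hx.1, le_trans hvv' hx.2⟩
  have mequiv : ∀ v x, 1 ≤ x → x ≤ N → (v ≤ φ x ↔ x ≤ m v) := by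
    intro v x h1 h2
    constructor
    · intro h
      have : x ∈ (Finset.Icc 1 N).filter (fun x => v ≤ φ x) := by
        simp only [Finset.mem_filter, Finset.mem_Icc]; exact ⟨⟨h1, h2⟩, h⟩
      rw [mIcc v, Finset.mem_Icc] at this; exact this.2
    · intro h
      have : x ∈ Finset.Icc 1 (m v) := by rw [Finset.mem_Icc]; exact ⟨h1, h⟩
      rw [← mIcc v, Finset.mem_filter] at this; exact this.2
  -- sum identity
  have sumid : ∑ v ∈ Finset.Icc 1 (2*t), m v = ∑ x ∈ Finset.Icc 1 N, φ x := by
    simp only [hm, Finset.card_filter]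
    rw [Finset.sum_comm]
    apply Finset.sum_congr rfl
    intro x hx
    rw [Finset.mem_Icc] at hx
    have hbx := bd x hx.1 hx.2
    calc ∑ v ∈ Finset.Icc 1 (2*t), (if v ≤ φ x then 1 else 0)
        = ((Finset.Icc 1 (2*t)).filter (fun v => v ≤ φ x)).card := by
          rw [Finset.card_filter]
      _ = (Finset.Icc 1 (φ x)).card := by
          congr 1; ext v; simp only [Finset.mem_filter, Finset.mem_Icc]; omega
      _ = φ x := by rw [Nat.card_Icc]; omega
  -- the greedy selection function
  set f : ℕ → ℕ := fun k => Nat.rec 0 (fun k ih => max (N+1 - m (k+1)) (ih+1)) k with hf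
  have f0 : f 0 = 0 := rfl
  have fsucc : ∀ k, f (k+1) = max (N+1 - m (k+1)) (f k + 1) := fun k => rfl
  have fmono : StrictMono f := by
    apply strictMono_nat_of_lt_succ
    intro k
    rw [fsucc k]
    exact lt_of_lt_of_le (Nat.lt_succ_self _) (le_max_right _ _)
  have fge : ∀ k, k ≤ f k := by
    intro k
    induction k with
    | zero => omega
    | succ k ih => rw [fsucc k]; have := le_max_right (N+1 - m (k+1)) (f k + 1); omega
  have flb : ∀ k, 1 ≤ k → N+1 - m k ≤ f k := by
    intro k hk
    obtain ⟨k', rfl⟩ := Nat.exists_eq_add_of_le hk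
    rw [show 1 + k' = k' + 1 by omega, fsucc k']
    exact le_max_left _ _
  -- characterization of f k
  have fchar : ∀ k, 1 ≤ k → f k = k ∨ ∃ r, 1 ≤ r ∧ r ≤ k ∧ f k + m r + r = N+1+k := by
    intro k hk
    induction k with
    | zero => omega
    | succ k ih =>
      rw [fsucc k]
      rcases Nat.le_total (N+1 - m (k+1)) (f k + 1) with h | h
      · rw [max_eq_right h]
        rcases Nat.eq_zero_or_pos k with rfl | hk0
        · left; rw [f0]
        · rcases ih hk0 with h1 | ⟨r, hr1, hrk, hr⟩
          · left; omega
          · right; exact ⟨r, hr1, by omega, by omega⟩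
      · rw [max_eq_left h]
        right
        refine ⟨k+1, by omega, le_rfl, ?_⟩
        have := mle (k+1); omega
  -- success or failure
  by_cases hsucc : ∀ k, 1 ≤ k → k ≤ t → (f k ≤ m (2*t+1-k) ∧ f k ≤ l+t)
  · refine ⟨f, fmono, fun k h1 h2 => ?_⟩
    obtain ⟨hfm, hflt⟩ := hsucc k h1 h2
    have hfk1 : 1 ≤ f k := le_trans h1 (fge k)
    have hfkN : f k ≤ N := by omega
    have hmk := mle k
    have hNf1 : 1 ≤ N+1 - f k := by omega
    have hNfN : N+1 - f k ≤ N := by omega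
    refine ⟨hfk1, hflt, ?_, ?_⟩
    · rw [mequiv k (N+1-f k) hNf1 hNfN]
      have := flb k h1; omega
    · rw [mequiv (2*t+1-k) (f k) hfk1 hfkN]; exact hfm
  · exfalso
    push_neg at hsucc
    obtain ⟨k, hk1, hkt, hfail⟩ := hsucc
    have hklN : k ≤ N := by omega
    have key : ∑ v ∈ Finset.Icc 1 (2*t), m v ≤ N*(2*t-1) := by
      rcases fchar k hk1 with hfk | ⟨r, hr1, hrk, hfr⟩
      · -- f k = k
        rcases lt_or_ge (m (2*t+1-k)) (f k) with hfail1 | hle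
        · -- m (2t+1-k) < k : AR2 via sum_split with r = w = 2t+1-k
          have h2t1k : 1 ≤ 2*t+1-k := by omega
          have := sum_split_bound m t N (2*t+1-k) (2*t+1-k) mmono mle h2t1k le_rfl (by omega)
          have har2 := AR2 l t k N (m (2*t+1-k)) hl ht hk1 hkt hN (by omega)
          calc ∑ v ∈ Finset.Icc 1 (2*t), m v
              ≤ (2*t+1-k-1)*N + 0 + (2*t+1-(2*t+1-k))*(m (2*t+1-k)) := by
                simpa using this
            _ ≤ N*(2*t-1) := by
                rw [show 2*t+1-(2*t+1-k) = k by omega]; omega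
        · -- l + t < f k = k ≤ t : impossible
          have := hfail hle; omega
      · -- f k = N+1-m r + (k-r)
        have hmrN := mle r
        rcases lt_or_ge (m (2*t+1-k)) (f k) with hfail1 | hle
        · -- m (2t+1-k) < f k  : AR3
          have hw : 2*t+1-k ≥ 1 := by omega
          have hsm : m r + m (2*t+1-k) + r ≤ N + k := by omega
          have hwr : m (2*t+1-k) ≤ m r := mmono r (2*t+1-k) hr1 (by omega)
          have := sum_split_bound m t N r (2*t+1-k) mmono mle hr1 (by omega) (by omega)
          have har3 := AR3 l t r k N (m r) (m (2*t+1-k)) hl ht hr1 hrk hkt hN hsm hwr hmrN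
          calc ∑ v ∈ Finset.Icc 1 (2*t), m v
              ≤ (r-1)*N + (2*t+1-k-r)*(m r) + (2*t+1-(2*t+1-k))*(m (2*t+1-k)) := this
            _ ≤ N*(2*t-1) := by
                rw [show 2*t+1-(2*t+1-k) = k by omega] at *; omega
        · -- l + t < f k : AR1
          have hfail2 := hfail hle
          have hmub : m r + r ≤ l+t+k := by omega
          have := sum_split_bound m t N r (2*t+1) mmono mle hr1 (by omega) le_rfl
          have har1 := AR1 l t r k N (m r) hl ht hr1 hrk hkt hN hmub
          calc ∑ v ∈ Finset.Icc 1 (2*t), m v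
              ≤ (r-1)*N + (2*t+1-r)*(m r) + (2*t+1-(2*t+1))*(m (2*t+1)) := this
            _ ≤ N*(2*t-1) := by simp only [Nat.sub_self, Nat.zero_mul]; omega
    omega

open Classical in
/-- The set of perfect matchings (partitions into 2-element subsets) of `B`. -/
noncomputable def pms (B : Finset ℕ) : Finset (Finset (Finset ℕ)) :=
  ((B.powersetCard 2).powerset).filter
    (fun P => P.biUnion id = B ∧ (P : Set (Finset ℕ)).Pairwise (fun e f => Disjoint e f))

lemma mem_pms {B : Finset ℕ} {P : Finset (Finset ℕ)} :
    P ∈ pms B ↔ (∀ e ∈ P, e ⊆ B ∧ e.card = 2) ∧ P.biUnion id = B ∧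
      (P : Set (Finset ℕ)).Pairwise (fun e f => Disjoint e f) := by
  classical
  unfold pms
  rw [Finset.mem_filter, Finset.mem_powerset]
  constructor
  · rintro ⟨h1, h2, h3⟩
    refine ⟨fun e he => ?_, h2, h3⟩
    have := h1 he
    rwa [Finset.mem_powersetCard] at this
  · rintro ⟨h1, h2, h3⟩
    refine ⟨fun e he => ?_, h2, h3⟩
    rw [Finset.mem_powersetCard]
    exact h1 e he

lemma pms_card_eq {B : Finset ℕ} {P : Finset (Finset ℕ)} (hP : P ∈ pms B) :
    2 * P.card = B.card := by
  classical
  rw [mem_pms] at hP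
  obtain ⟨h1, h2, h3⟩ := hP
  have : (P.biUnion id).card = ∑ e ∈ P, e.card := by
    apply Finset.card_biUnion
    intro e he f hf hef
    exact h3 he hf hef
  rw [h2] at this
  rw [this, Finset.sum_congr rfl (fun e he => (h1 e he).2), Finset.sum_const, smul_eq_mul]
  ring

lemma pms_nonempty_aux (n : ℕ) : ∀ B : Finset ℕ, B.card = n → Even B.card → (pms B).Nonempty := by
  classical
  induction n using Nat.strong_induction_on with
  | _ n ih =>
    intro B hn h
    rcases Finset.eq_empty_or_nonempty B with rfl | hB
    · exact ⟨∅, by rw [mem_pms]; simp⟩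
    · obtain ⟨a, ha⟩ := hB
      have h2 : 2 ≤ B.card := by
        rcases h with ⟨k, hk⟩
        have : B.card ≠ 0 := by simp [Finset.card_ne_zero_of_mem ha]
        omega
      obtain ⟨b, hb, hab⟩ : ∃ b ∈ B, b ≠ a := by
        by_contra hc
        push_neg at hc
        have : B ⊆ {a} := fun x hx => Finset.mem_singleton.mpr (hc x hx)
        have := Finset.card_le_card this
        simp at this
        omega
      set B' := B \ {a, b} with hB'
      have hcard' : B'.card = B.card - 2 := by
        rw [hB', Finset.card_sdiff_of_subset (by intro x hx; simp at hx; rcases hx with rfl | rfl <;> assumption)]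
        simp [Finset.card_pair (Ne.symm hab)]
      have heven' : Even B'.card := by
        rw [hcard']; rcases h with ⟨k, hk⟩; exact ⟨k-1, by omega⟩
      obtain ⟨P', hP'⟩ := ih B'.card (by omega) B' rfl heven'
      rw [mem_pms] at hP'
      obtain ⟨g1, g2, g3⟩ := hP'
      refine ⟨insert {a, b} P', ?_⟩
      rw [mem_pms]
      have habB' : Disjoint ({a, b} : Finset ℕ) B' := by
        rw [hB']
        simp only [Finset.disjoint_left]
        intro x hx
        simp only [Finset.mem_insert, Finset.mem_singleton] at hx
        simp only [Finset.mem_sdiff, Finset.mem_insert, Finset.mem_singleton, not_and, not_not]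
        intro _
        tauto
      have habP' : ({a, b} : Finset ℕ) ∉ P' := by
        intro hc
        have hsub : ({a,b} : Finset ℕ) ⊆ B' := (g1 _ hc).1
        have : a ∈ B' := hsub (by simp)
        rw [hB'] at this
        simp at this
      constructor
      · intro e he
        rcases Finset.mem_insert.mp he with rfl | he'
        · exact ⟨by intro x hx; simp at hx; rcases hx with rfl | rfl <;> assumption,
            Finset.card_pair (Ne.symm hab)⟩
        · exact ⟨(g1 e he').1.trans (Finset.sdiff_subset), (g1 e he').2⟩
      constructor
      · rw [Finset.biUnion_insert, g2, hB']
        ext x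
        simp only [Finset.mem_union, Finset.mem_sdiff, Finset.mem_insert, Finset.mem_singleton, id]
        constructor
        · rintro (h | h)
          · rcases h with rfl | h
            · exact ha
            · subst h; exact hb
          · exact h.1
        · intro hx
          by_cases hxa : x = a
          · left; left; exact hxa
          · by_cases hxb : x = b
            · left; right; simp [hxb]
            · right; exact ⟨hx, by tauto⟩
      · intro e he f hf hef
        simp only [Finset.coe_insert, Set.mem_insert_iff, Finset.mem_coe] at he hf
        rcases he with rfl | he <;> rcases hf with rfl | hf
        · exact absurd rfl hef
        · exact habB'.mono_right ((g1 f hf).1.trans (le_refl _))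
        · exact (habB'.mono_right ((g1 e he).1.trans (le_refl _))).symm
        · exact g3 he hf hef

lemma pms_nonempty (B : Finset ℕ) (h : Even B.card) : (pms B).Nonempty :=
  pms_nonempty_aux B.card B rfl h

lemma swap_mem_of_mem {u v x : ℕ} {B : Finset ℕ} (hu : u ∈ B) (hv : v ∈ B) (hx : x ∈ B) :
    Equiv.swap u v x ∈ B := by
  rcases eq_or_ne x u with rfl | hxu
  · rwa [Equiv.swap_apply_left]
  · rcases eq_or_ne x v with rfl | hxv
    · rwa [Equiv.swap_apply_right]
    · rwa [Equiv.swap_apply_of_ne_of_ne hxu hxv]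

lemma perm_image_pms {B : Finset ℕ} (τ : Equiv.Perm ℕ) (hτ : ∀ x ∈ B, τ x ∈ B)
    {P : Finset (Finset ℕ)} (hP : P ∈ pms B) :
    P.image (fun g => g.image τ) ∈ pms B := by
  classical
  have hBim : B.image τ = B :=
    Finset.eq_of_subset_of_card_le
      (fun x hx => by
        obtain ⟨y, hy, rfl⟩ := Finset.mem_image.mp hx
        exact hτ y hy)
      (by rw [Finset.card_image_of_injective _ τ.injective])
  rw [mem_pms] at hP ⊢
  obtain ⟨h1, h2, h3⟩ := hP
  refine ⟨?_, ?_, ?_⟩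
  · intro E hE
    obtain ⟨g, hg, rfl⟩ := Finset.mem_image.mp hE
    constructor
    · intro x hx
      obtain ⟨y, hy, rfl⟩ := Finset.mem_image.mp hx
      exact hτ y ((h1 g hg).1 hy)
    · rw [Finset.card_image_of_injective _ τ.injective]; exact (h1 g hg).2
  · ext x
    simp only [Finset.mem_biUnion, Finset.mem_image, id]
    constructor
    · rintro ⟨E, ⟨g, hg, rfl⟩, hx⟩
      obtain ⟨y, hy, rfl⟩ := Finset.mem_image.mp hx
      exact hτ y (h2 ▸ Finset.mem_biUnion.mpr ⟨g, hg, hy⟩)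
    · intro hx
      rw [← hBim] at hx
      obtain ⟨y, hy, rfl⟩ := Finset.mem_image.mp hx
      rw [← h2] at hy
      obtain ⟨g, hg, hyg⟩ := Finset.mem_biUnion.mp hy
      exact ⟨g.image τ, ⟨g, hg, rfl⟩, Finset.mem_image_of_mem _ hyg⟩
  · intro E hE F hF hEF
    simp only [Finset.coe_image, Set.mem_image, Finset.mem_coe] at hE hF
    obtain ⟨g, hg, rfl⟩ := hE
    obtain ⟨g', hg', rfl⟩ := hF
    have hgg' : g ≠ g' := fun hc => hEF (by rw [hc])
    rw [Finset.disjoint_image τ.injective]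
    exact h3 hg hg' hgg'

lemma count_uniform {B : Finset ℕ} {e f : Finset ℕ} (he : e ∈ B.powersetCard 2)
    (hf : f ∈ B.powersetCard 2) :
    ((pms B).filter (fun P => e ∈ P)).card = ((pms B).filter (fun P => f ∈ P)).card := by
  classical
  rw [Finset.mem_powersetCard] at he hf
  obtain ⟨a, b, hab, rfl⟩ := Finset.card_eq_two.mp he.2
  obtain ⟨c, d, hcd, rfl⟩ := Finset.card_eq_two.mp hf.2
  have ha : a ∈ B := he.1 (by simp)
  have hb : b ∈ B := he.1 (by simp)
  have hc : c ∈ B := hf.1 (by simp)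
  have hd : d ∈ B := hf.1 (by simp)
  set τ₁ := Equiv.swap a c with hτ₁
  set τ := τ₁.trans (Equiv.swap (τ₁ b) d) with hτdef
  have hba' : τ₁ b ≠ c := by
    have h1 : τ₁ a = c := Equiv.swap_apply_left a c
    intro h
    exact hab (τ₁.injective (by rw [h, h1])).symm
  have hτa : τ a = c := by
    rw [hτdef]
    simp only [Equiv.trans_apply, hτ₁, Equiv.swap_apply_left]
    exact Equiv.swap_apply_of_ne_of_ne (Ne.symm hba') hcd
  have hτb : τ b = d := by rw [hτdef]; simp [Equiv.swap_apply_left]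
  have hτB : ∀ x ∈ B, τ x ∈ B := by
    intro x hx
    rw [hτdef]
    simp only [Equiv.trans_apply]
    apply swap_mem_of_mem _ hd (swap_mem_of_mem ha hc hx)
    exact swap_mem_of_mem ha hc hb
  have hτab : ({a, b} : Finset ℕ).image τ = {c, d} := by
    rw [Finset.image_insert, Finset.image_singleton, hτa, hτb]
  -- inverse data
  have hτB' : ∀ x ∈ B, τ.symm x ∈ B := by
    intro x hx
    have hBim : B.image τ = B :=
      Finset.eq_of_subset_of_card_le
        (fun y hy => by
          obtain ⟨z, hz, rfl⟩ := Finset.mem_image.mp hy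
          exact hτB z hz)
        (by rw [Finset.card_image_of_injective _ τ.injective])
    rw [← hBim] at hx
    obtain ⟨y, hy, rfl⟩ := Finset.mem_image.mp hx
    simpa using hy
  apply Finset.card_bij' (fun P _ => P.image (fun g => g.image τ))
      (fun P _ => P.image (fun g => g.image τ.symm))
  · intro P hP
    rw [Finset.image_image]
    have : ((fun g => Finset.image (⇑τ.symm) g) ∘ fun g => Finset.image (⇑τ) g) = id := by
      funext g
      simp [Finset.image_image]
    rw [this, Finset.image_id]
  · intro P hP
    rw [Finset.image_image]
    have : ((fun g => Finset.image (⇑τ) g) ∘ fun g => Finset.image (⇑τ.symm) g) = id := by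
      funext g
      simp [Finset.image_image]
    rw [this, Finset.image_id]
  · -- maps into target
    intro P hP
    rw [Finset.mem_filter] at hP ⊢
    refine ⟨perm_image_pms τ hτB hP.1, ?_⟩
    rw [← hτab]
    exact Finset.mem_image_of_mem _ hP.2
  · intro P hP
    rw [Finset.mem_filter]  at hP ⊢
    refine ⟨perm_image_pms τ.symm hτB' hP.1, ?_⟩
    have : ({a,b} : Finset ℕ) = ({c,d} : Finset ℕ).image τ.symm := by
      rw [← hτab, Finset.image_image]
      simp
    rw [this]
    exact Finset.mem_image_of_mem _ hP.2

lemma pms_insert {B' : Finset ℕ} {P' : Finset (Finset ℕ)} (hP' : P' ∈ pms B')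
    {e : Finset ℕ} (he2 : e.card = 2) (hd : Disjoint e B') :
    insert e P' ∈ pms (B' ∪ e) := by
  classical
  rw [mem_pms] at hP' ⊢
  obtain ⟨g1, g2, g3⟩ := hP'
  have heP' : e ∉ P' := by
    intro hc
    have hsub : e ⊆ B' := (g1 _ hc).1
    obtain ⟨x, hx⟩ := Finset.card_pos.mp (by omega : 0 < e.card)
    exact (Finset.disjoint_left.mp hd hx) (hsub hx)
  refine ⟨?_, ?_, ?_⟩
  · intro g hg
    rcases Finset.mem_insert.mp hg with rfl | hg'
    · exact ⟨Finset.subset_union_right, he2⟩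
    · exact ⟨(g1 g hg').1.trans Finset.subset_union_left, (g1 g hg').2⟩
  · rw [Finset.biUnion_insert, g2]
    ext x
    simp only [Finset.mem_union, id]
    tauto
  · intro E hE F hF hEF
    simp only [Finset.coe_insert, Set.mem_insert_iff, Finset.mem_coe] at hE hF
    rcases hE with rfl | hE <;> rcases hF with rfl | hF
    · exact absurd rfl hEF
    · exact hd.mono_right (g1 F hF).1
    · exact (hd.mono_right (g1 E hE).1).symm
    · exact g3 hE hF hEF

lemma count_pos {B : Finset ℕ} {e : Finset ℕ} (he : e ∈ B.powersetCard 2)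
    (heven : Even B.card) :
    0 < ((pms B).filter (fun P => e ∈ P)).card := by
  classical
  rw [Finset.mem_powersetCard] at he
  have hcard' : (B \ e).card = B.card - 2 := by
    rw [Finset.card_sdiff_of_subset he.1, he.2]
  have heven' : Even (B \ e).card := by
    rw [hcard']; rcases heven with ⟨k, hk⟩
    have : 2 ≤ B.card := le_trans (by omega : 2 ≤ e.card + 0) (by
      have := Finset.card_le_card he.1; omega)
    exact ⟨k-1, by omega⟩
  obtain ⟨P', hP'⟩ := pms_nonempty _ heven'
  rw [Finset.card_pos]
  refine ⟨insert e P', ?_⟩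
  rw [Finset.mem_filter]
  have := pms_insert hP' he.2 (Finset.disjoint_sdiff)
  rw [Finset.sdiff_union_of_subset he.1] at this
  exact ⟨this, Finset.mem_insert_self _ _⟩

/-- The master double-counting bound over perfect matchings. -/
lemma double_count (B : Finset ℕ) (t : ℕ) (ht : 1 ≤ t) (hB : B.card = 4*t)
    (X : Finset ℕ) (L : ℕ → Finset (Finset ℕ)) (hL : ∀ x ∈ X, L x ⊆ B.powersetCard 2)
    (C : ℕ)
    (hper : ∀ P ∈ pms B, ∑ x ∈ X, (P.filter (fun e => e ∈ L x)).card ≤ C) :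
    ∑ x ∈ X, (L x).card ≤ (4*t-1) * C := by
  classical
  have heven : Even B.card := by rw [hB]; exact ⟨2*t, by ring⟩
  -- pairs of B
  set pairs := B.powersetCard 2 with hpairs
  have hpairscard : pairs.card = 2*t*(4*t-1) := by
    rw [hpairs, Finset.card_powersetCard, hB, Nat.choose_two_right]
    have : 4*t*(4*t-1) = 2*(2*t*(4*t-1)) := by ring
    omega
  have hpairsne : pairs.Nonempty := by
    rw [← Finset.card_pos, hpairscard]
    have : 1 ≤ 4*t-1 := by omega
    positivity
  obtain ⟨e₀, he₀⟩ := hpairsne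
  set γ := ((pms B).filter (fun P => e₀ ∈ P)).card with hγ
  have hγpos : 0 < γ := count_pos he₀ heven
  have huniform : ∀ e ∈ pairs, ((pms B).filter (fun P => e ∈ P)).card = γ :=
    fun e he => count_uniform he he₀
  set M := (pms B).card with hM
  -- identity: M * (2*t) = pairs.card * γ
  have h1 : ∑ P ∈ pms B, P.card = M * (2*t) := by
    have : ∀ P ∈ pms B, P.card = 2*t := by
      intro P hP; have := pms_card_eq hP; omega
    rw [Finset.sum_congr rfl this, Finset.sum_const, smul_eq_mul]
  have hPsub : ∀ P ∈ pms B, P.card = (pairs.filter (fun e => e ∈ P)).card := by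
    intro P hP
    congr 1
    apply Finset.Subset.antisymm
    · intro e he
      rw [Finset.mem_filter]
      refine ⟨?_, he⟩
      rw [hpairs, Finset.mem_powersetCard]
      exact (mem_pms.mp hP).1 e he
    · intro e he
      exact (Finset.mem_filter.mp he).2
  have h2 : ∑ P ∈ pms B, P.card = ∑ e ∈ pairs, ((pms B).filter (fun P => e ∈ P)).card := by
    calc ∑ P ∈ pms B, P.card
        = ∑ P ∈ pms B, (pairs.filter (fun e => e ∈ P)).card := Finset.sum_congr rfl hPsub
      _ = ∑ P ∈ pms B, ∑ e ∈ pairs, (if e ∈ P then 1 else 0) :=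
          Finset.sum_congr rfl (fun P _ => Finset.card_filter _ _)
      _ = ∑ e ∈ pairs, ∑ P ∈ pms B, (if e ∈ P then 1 else 0) := Finset.sum_comm
      _ = ∑ e ∈ pairs, ((pms B).filter (fun P => e ∈ P)).card :=
          Finset.sum_congr rfl (fun e _ => (Finset.card_filter _ _).symm)
  have hid : M * (2*t) = 2*t*(4*t-1) * γ := by
    calc M * (2*t) = ∑ P ∈ pms B, P.card := h1.symm
      _ = ∑ e ∈ pairs, ((pms B).filter (fun P => e ∈ P)).card := h2
      _ = ∑ e ∈ pairs, γ := Finset.sum_congr rfl huniform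
      _ = pairs.card * γ := by rw [Finset.sum_const, smul_eq_mul]
      _ = 2*t*(4*t-1) * γ := by rw [hpairscard]
  have hMγ : M = (4*t-1) * γ := by
    have h2t : 0 < 2*t := by omega
    have h3 : M * (2*t) = ((4*t-1)*γ) * (2*t) := by rw [hid]; ring
    exact Nat.eq_of_mul_eq_mul_right h2t h3
  -- main count
  have hmain : (∑ x ∈ X, (L x).card) * γ ≤ M * C := by
    have hLHS : ∑ P ∈ pms B, ∑ x ∈ X, (P.filter (fun e => e ∈ L x)).card
        = ∑ x ∈ X, (L x).card * γ := by
      rw [Finset.sum_comm]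
      apply Finset.sum_congr rfl
      intro x hx
      have hfilter : ∀ P ∈ pms B, (P.filter (fun e => e ∈ L x)).card
          = ((L x).filter (fun e => e ∈ P)).card := by
        intro P hP
        congr 1
        ext e
        simp only [Finset.mem_filter]
        tauto
      rw [Finset.sum_congr rfl hfilter]
      simp only [Finset.card_filter]
      rw [Finset.sum_comm]
      have : ∀ e ∈ L x, ∑ P ∈ pms B, (if e ∈ P then 1 else 0) = γ := by
        intro e he
        rw [← Finset.card_filter]
        exact huniform e (hL x hx he)
      rw [Finset.sum_congr rfl this, Finset.sum_const, smul_eq_mul]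
    calc (∑ x ∈ X, (L x).card) * γ = ∑ x ∈ X, (L x).card * γ := by
          rw [Finset.sum_mul]
      _ = ∑ P ∈ pms B, ∑ x ∈ X, (P.filter (fun e => e ∈ L x)).card := hLHS.symm
      _ ≤ ∑ P ∈ pms B, C := Finset.sum_le_sum hper
      _ = M * C := by rw [Finset.sum_const, smul_eq_mul]
  rw [hMγ] at hmain
  have : (∑ x ∈ X, (L x).card) * γ ≤ ((4*t-1) * C) * γ := by
    calc (∑ x ∈ X, (L x).card) * γ ≤ (4*t-1) * γ * C := hmain
      _ = ((4*t-1) * C) * γ := by ring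
  exact Nat.le_of_mul_le_mul_right this hγpos

lemma compress_aux (n a mc : ℕ) (F : Finset (Finset ℕ)) (hsh : IsShifted n F)
    (ha : 1 ≤ a) (hwin : a + 3*mc - 1 ≤ n) :
    ∀ μ : ℕ, ∀ M : Finset (Finset ℕ), (∑ T ∈ M, ∑ v ∈ T, v) = μ →
    M ⊆ F → (∀ T ∈ M, T.card = 3 ∧ T ⊆ Finset.Icc a n) →
    ((M : Set (Finset ℕ)).Pairwise fun A B => Disjoint A B) → M.card = mc →
    ∃ M' : Finset (Finset ℕ), M' ⊆ F ∧
      (∀ T ∈ M', T.card = 3 ∧ T ⊆ Finset.Icc a (a+3*mc-1)) ∧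
      ((M' : Set (Finset ℕ)).Pairwise fun A B => Disjoint A B) ∧ M'.card = mc := by
  classical
  intro μ
  induction μ using Nat.strong_induction_on with
  | _ μ ih =>
    intro M hμ hMF hM3 hMd hMc
    by_cases hgood : ∀ T ∈ M, T ⊆ Finset.Icc a (a+3*mc-1)
    · exact ⟨M, hMF, fun T hT => ⟨(hM3 T hT).1, hgood T hT⟩, hMd, hMc⟩
    · push_neg at hgood
      obtain ⟨T₀, hT₀M, hT₀bad⟩ := hgood
      obtain ⟨x, hxT₀, hxW⟩ : ∃ x ∈ T₀, x ∉ Finset.Icc a (a+3*mc-1) := by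
        by_contra hc
        push_neg at hc
        exact hT₀bad (fun v hv => hc v hv)
      have hxan : x ∈ Finset.Icc a n := (hM3 T₀ hT₀M).2 hxT₀
      rw [Finset.mem_Icc] at hxan
      have hxbig : a + 3*mc - 1 < x := by
        rw [Finset.mem_Icc] at hxW
        omega
      have hmc1 : 1 ≤ mc := by
        rcases Nat.eq_zero_or_pos mc with rfl | h
        · rw [Finset.card_eq_zero] at hMc; subst hMc; simp at hT₀M
        · exact h
      set U := M.biUnion (fun A => A) with hU
      have hUcard : U.card = 3*mc := by
        rw [hU, Finset.card_biUnion (fun A hA B hB hAB => hMd hA hB hAB)]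
        rw [Finset.sum_congr rfl (fun T hT => (hM3 T hT).1), Finset.sum_const, smul_eq_mul]
        omega
      set W := Finset.Icc a (a+3*mc-1) with hW
      have hWcard : W.card = 3*mc := by rw [hW, Nat.card_Icc]; omega
      have hxU : x ∈ U := Finset.mem_biUnion.mpr ⟨T₀, hT₀M, hxT₀⟩
      obtain ⟨y, hyW, hyU⟩ : ∃ y ∈ W, y ∉ U := by
        by_contra hc
        push_neg at hc
        have hWU : W ⊆ U := hc
        have : W = U := Finset.eq_of_subset_of_card_le hWU (by omega)
        rw [← this] at hxU
        exact hxW hxU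
      rw [hW, Finset.mem_Icc] at hyW
      have hyT₀ : y ∉ T₀ := fun hc => hyU (Finset.mem_biUnion.mpr ⟨T₀, hT₀M, hc⟩)
      have hyx : y < x := by omega
      set T₀' := insert y (T₀.erase x) with hT₀'
      have hT₀'F : T₀' ∈ F := mem_shift hsh (hMF hT₀M) (by omega) hyx (by omega) hxT₀ hyT₀
      have hyE : y ∉ T₀.erase x := fun hc => hyT₀ (Finset.mem_of_mem_erase hc)
      have hT₀'card : T₀'.card = 3 := by
        rw [hT₀', Finset.card_insert_of_notMem hyE, Finset.card_erase_of_mem hxT₀,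
          (hM3 T₀ hT₀M).1]
      have hT₀'sub : T₀' ⊆ Finset.Icc a n := by
        intro v hv
        rw [hT₀', Finset.mem_insert] at hv
        rcases hv with rfl | hv
        · rw [Finset.mem_Icc]; omega
        · exact (hM3 T₀ hT₀M).2 (Finset.mem_of_mem_erase hv)
      have hT₀'new : T₀' ∉ M := by
        intro hc
        exact hyU (Finset.mem_biUnion.mpr ⟨T₀', hc, by rw [hT₀']; exact Finset.mem_insert_self _ _⟩)
      set M' := insert T₀' (M.erase T₀) with hM'
      have hT₀'notE : T₀' ∉ M.erase T₀ := fun hc => hT₀'new (Finset.mem_of_mem_erase hc)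
      have hM'c : M'.card = mc := by
        rw [hM', Finset.card_insert_of_notMem hT₀'notE, Finset.card_erase_of_mem hT₀M, hMc]
        omega
      have hdisjT₀' : ∀ T ∈ M.erase T₀, Disjoint T₀' T := by
        intro T hT
        have hTM := Finset.mem_of_mem_erase hT
        have hTne : T ≠ T₀ := Finset.ne_of_mem_erase hT
        have hdisj : Disjoint T₀ T := hMd hT₀M hTM (Ne.symm hTne)
        rw [hT₀', Finset.disjoint_left]
        intro v hv
        rw [Finset.mem_insert] at hv
        rcases hv with rfl | hv
        · exact fun hc => hyU (Finset.mem_biUnion.mpr ⟨T, hTM, hc⟩)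
        · exact fun hc => (Finset.disjoint_left.mp hdisj (Finset.mem_of_mem_erase hv)) hc
      have hM'd : ((M' : Set (Finset ℕ)).Pairwise fun A B => Disjoint A B) := by
        intro A hA B hB hAB
        rw [hM'] at hA hB
        simp only [Finset.coe_insert, Set.mem_insert_iff, Finset.mem_coe] at hA hB
        rcases hA with rfl | hA <;> rcases hB with rfl | hB
        · exact absurd rfl hAB
        · exact hdisjT₀' B hB
        · exact (hdisjT₀' A hA).symm
        · exact hMd (Finset.mem_of_mem_erase hA) (Finset.mem_of_mem_erase hB) hAB
      have hM'F : M' ⊆ F := by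
        intro T hT
        rw [hM', Finset.mem_insert] at hT
        rcases hT with rfl | hT
        · exact hT₀'F
        · exact hMF (Finset.mem_of_mem_erase hT)
      have hM'3 : ∀ T ∈ M', T.card = 3 ∧ T ⊆ Finset.Icc a n := by
        intro T hT
        rw [hM', Finset.mem_insert] at hT
        rcases hT with rfl | hT
        · exact ⟨hT₀'card, hT₀'sub⟩
        · exact hM3 T (Finset.mem_of_mem_erase hT)
      -- measure decreases
      have hsumT₀' : (∑ v ∈ T₀', v) + x = (∑ v ∈ T₀, v) + y := by
        rw [hT₀', Finset.sum_insert hyE]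
        have := Finset.add_sum_erase T₀ id hxT₀
        simp only [id] at this
        omega
      have hmeasM : ∑ T ∈ M, ∑ v ∈ T, v = (∑ T ∈ M.erase T₀, ∑ v ∈ T, v) + ∑ v ∈ T₀, v := by
        rw [Finset.sum_erase_add M _ hT₀M]
      have hmeasM' : ∑ T ∈ M', ∑ v ∈ T, v = (∑ T ∈ M.erase T₀, ∑ v ∈ T, v) + ∑ v ∈ T₀', v := by
        rw [hM', Finset.sum_insert hT₀'notE]; omega
      have hlt : ∑ T ∈ M', ∑ v ∈ T, v < μ := by omega
      exact ih _ hlt M' rfl hM'F hM'3 hM'd hM'c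

lemma compress_matching (n a mc : ℕ) (F : Finset (Finset ℕ)) (hsh : IsShifted n F)
    (ha : 1 ≤ a) (hwin : a + 3*mc - 1 ≤ n) (M : Finset (Finset ℕ))
    (hMF : M ⊆ F) (hM3 : ∀ T ∈ M, T.card = 3 ∧ T ⊆ Finset.Icc a n)
    (hMd : (M : Set (Finset ℕ)).Pairwise fun A B => Disjoint A B) (hMc : M.card = mc) :
    ∃ M' : Finset (Finset ℕ), M' ⊆ F ∧
      (∀ T ∈ M', T.card = 3 ∧ T ⊆ Finset.Icc a (a+3*mc-1)) ∧
      ((M' : Set (Finset ℕ)).Pairwise fun A B => Disjoint A B) ∧ M'.card = mc :=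
  compress_aux n a mc F hsh ha hwin _ M rfl hMF hM3 hMd hMc

/-- Greedy system of distinct representatives when `|T k| ≥ k`. -/
lemma greedy_sdr (T : ℕ → Finset (Finset ℕ)) :
    ∀ j : ℕ, (∀ k, 1 ≤ k → k ≤ j → k ≤ (T k).card) →
    ∃ g : ℕ → Finset ℕ, (∀ k, 1 ≤ k → k ≤ j → g k ∈ T k) ∧
      (∀ k k', 1 ≤ k → k ≤ j → 1 ≤ k' → k' ≤ j → k ≠ k' → g k ≠ g k') := by
  classical
  intro j
  induction j with
  | zero => intro _; exact ⟨fun _ => ∅, fun k h1 h2 => by omega, fun k k' h1 h2 => by omega⟩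
  | succ j ih =>
    intro hT
    obtain ⟨g, hg1, hg2⟩ := ih (fun k h1 h2 => hT k h1 (by omega))
    set used := (Finset.Icc 1 j).image g with hused
    have husedcard : used.card ≤ j := le_trans (Finset.card_image_le) (by rw [Nat.card_Icc]; omega)
    have hTj : j+1 ≤ (T (j+1)).card := hT (j+1) (by omega) le_rfl
    have hex : ∃ e ∈ T (j+1), e ∉ used := by
      by_contra hc
      push_neg at hc
      have : T (j+1) ⊆ used := hc
      have := Finset.card_le_card this
      omega
    obtain ⟨e, he, heused⟩ := hex
    refine ⟨fun k => if k = j+1 then e else g k, ?_, ?_⟩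
    · intro k h1 h2
      by_cases hk : k = j+1
      · simp only [hk, if_pos rfl]; exact he
      · simp only [if_neg hk]; exact hg1 k h1 (by omega)
    · intro k k' h1 h2 h1' h2' hkk'
      by_cases hk : k = j+1 <;> by_cases hk' : k' = j+1
      · omega
      · simp only [if_pos hk, if_neg hk']
        intro hc
        exact heused (hc ▸ Finset.mem_image.mpr ⟨k', by rw [Finset.mem_Icc]; omega, rfl⟩)
      · simp only [if_neg hk, if_pos hk']
        intro hc
        exact heused (hc ▸ Finset.mem_image.mpr ⟨k, by rw [Finset.mem_Icc]; omega, rfl⟩)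
      · simp only [if_neg hk, if_neg hk']
        exact hg2 k k' h1 (by omega) h1' (by omega) hkk'

theorem stmt_12 (n s l c d : ℕ) (hs0 : 0 < s) (hl0 : 0 < l) (hc0 : 0 < c)
    (hcl : c + l = s) (hn : n = 2 * l + 3 * c)
    (F : Finset (Finset ℕ)) (hF : ∀ A ∈ F, A ⊆ ground n) (hsh : IsShifted n F)
    (hnu : matchingNumber F < s)
    (hd : Odd d) (hdc : d ≤ c + 1) (hdF : d ≤ dF l F)
    (hm : c + 1 - d ≤ matchingNumber (F ∩ (Finset.Icc (2 * l + d) n).powersetCard 3)) :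
    (2 * (l : ℤ) + (d : ℤ) - 1) * (2 * (d : ℤ) - 3) ≤ (yF n F 3 : ℤ) := by
  classical
  rcases Nat.lt_or_ge d 3 with hd3 | hd3
  · -- d = 1 : right-hand side is non-positive
    have hd1 : d = 1 := by rcases hd with ⟨k, hk⟩; omega
    subst hd1
    have h0 : (0:ℤ) ≤ (yF n F 3 : ℤ) := by positivity
    have h1 : (0:ℤ) ≤ (l:ℤ) := by positivity
    push_cast
    nlinarith
  · -- d ≥ 3
    obtain ⟨t, rfl⟩ : ∃ t, d = 2*t+1 := by
      rcases hd with ⟨k, hk⟩; exact ⟨k, by omega⟩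
    have ht : 1 ≤ t := by omega
    have hc2t : 2*t ≤ c := by omega
    set N := 2*l + 2*t with hN
    set m := c - 2*t with hmdef
    have hnN : n = N + 3*m + 4*t := by omega
    -- Step A: all pairs {i, N+1-i}, i ≤ l+t, belong to F
    have hpairsF : ∀ i, 1 ≤ i → i ≤ l + t → ({i, N+1-i} : Finset ℕ) ∈ F := by
      have hnd : ¬ DCond l F (2*t) := by
        intro hD
        have := Nat.sInf_le (show 2*t ∈ {d : ℕ | DCond l F d} from hD)
        have : dF l F ≤ 2*t := this
        omega
      intro i h1 h2
      by_contra hiF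
      apply hnd
      left
      refine ⟨⟨t, by ring⟩, ⟨i, ?_, ?_⟩⟩
      · rw [Finset.mem_Icc]
        constructor
        · exact h1
        · have : 2*t/2 = t := by omega
          rw [this]; exact h2
      · have : 2*l + 2*t + 1 - i = N+1-i := by omega
        rw [this]; exact hiF
    -- Step B: the compressed triple matching
    obtain ⟨Mstar, hMsF, hMs3, hMsd, hMsc⟩ :
        ∃ M' : Finset (Finset ℕ), M' ⊆ F ∧
          (∀ T ∈ M', T.card = 3 ∧ T ⊆ Finset.Icc (N+1) (N+3*m)) ∧
          ((M' : Set (Finset ℕ)).Pairwise fun A B => Disjoint A B) ∧ M'.card = m := by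
      rcases Nat.eq_zero_or_pos m with hm0 | hm0
      · refine ⟨∅, by simp, by simp, ?_, by simp [hm0]⟩
        simp only [Finset.coe_empty]
        exact Set.pairwise_empty _
      · have hm' : m ≤ matchingNumber (F ∩ (Finset.Icc (2*l+(2*t+1)) n).powersetCard 3) := by
          have : c + 1 - (2*t+1) = m := by omega
          rw [← this]; exact hm
        obtain ⟨M, hMsub, hMdisj, hMcard⟩ :=
          exists_matching (F ∩ (Finset.Icc (2*l+(2*t+1)) n).powersetCard 3) m hm0 hm'
        have hMF' : M ⊆ F := fun T hT => (Finset.mem_inter.mp (hMsub hT)).1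
        have hM3 : ∀ T ∈ M, T.card = 3 ∧ T ⊆ Finset.Icc (2*l+(2*t+1)) n := by
          intro T hT
          have := (Finset.mem_inter.mp (hMsub hT)).2
          rw [Finset.mem_powersetCard] at this
          exact ⟨this.2, this.1⟩
        have h2ld : 2*l+(2*t+1) = N+1 := by omega
        rw [h2ld] at hM3
        obtain ⟨M', h1, h2, h3, h4⟩ :=
          compress_matching n (N+1) m F hsh (by omega) (by omega) M hMF' hM3 hMdisj hMcard
        refine ⟨M', h1, ?_, h3, h4⟩
        intro T hT
        have := h2 T hT
        rwa [show (N+1) + 3*m - 1 = N + 3*m by omega] at this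
    -- the top block B₀
    set B₀ := Finset.Icc (N+1+3*m) n with hB₀
    have hcB : B₀.card = 4*t := by rw [hB₀, Nat.card_Icc]; omega
    have hBlo : ∀ b ∈ B₀, N+1+3*m ≤ b ∧ b ≤ n := by
      intro b hb; rw [hB₀, Finset.mem_Icc] at hb; exact hb
    -- the link of a vertex
    set L : ℕ → Finset (Finset ℕ) :=
      fun x => (B₀.powersetCard 2).filter (fun e => insert x e ∈ F) with hL
    -- Step C: the per-matching bound
    have hper : ∀ P ∈ pms B₀,
        ∑ x ∈ Finset.Icc 1 N, (P.filter (fun e => e ∈ L x)).card ≤ N*(2*t-1) := by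
      intro P hP
      by_contra hcon
      push_neg at hcon
      have hPpairs : ∀ e ∈ P, e ⊆ B₀ ∧ e.card = 2 := (mem_pms.mp hP).1
      have hPdisj := (mem_pms.mp hP).2.2
      have hPcard : P.card = 2*t := by
        have := pms_card_eq hP; rw [hcB] at this; omega
      have hxnot : ∀ x, x ≤ N → ∀ e ∈ P, x ∉ e := by
        intro x hx e he hc
        have := (hBlo _ ((hPpairs e he).1 hc)).1; omega
      set φ : ℕ → ℕ := fun x => (P.filter (fun e => insert x e ∈ F)).card with hφ
      have hfeq : ∀ x, P.filter (fun e => e ∈ L x) = P.filter (fun e => insert x e ∈ F) := by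
        intro x
        ext e
        simp only [Finset.mem_filter, hL, Finset.mem_powersetCard]
        constructor
        · rintro ⟨h1, _, h2⟩
          exact ⟨h1, h2⟩
        · rintro ⟨h1, h2⟩
          exact ⟨h1, ⟨(hPpairs e h1).1, (hPpairs e h1).2⟩, h2⟩
      have hsumφ : N*(2*t-1) < ∑ x ∈ Finset.Icc 1 N, φ x := by
        calc N*(2*t-1) < ∑ x ∈ Finset.Icc 1 N, (P.filter (fun e => e ∈ L x)).card := hcon
          _ = ∑ x ∈ Finset.Icc 1 N, φ x :=
              Finset.sum_congr rfl (fun x _ => by rw [hφ, hfeq x])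
      have hmono : ∀ x y, 1 ≤ x → x ≤ y → y ≤ N → φ y ≤ φ x := by
        intro x y h1 hxy hyN
        rcases eq_or_lt_of_le hxy with rfl | hlt
        · exact le_rfl
        · apply Finset.card_le_card
          intro e he
          rw [Finset.mem_filter] at he ⊢
          refine ⟨he.1, ?_⟩
          have hye : y ∉ e := hxnot y hyN e he.1
          have hxe : x ∉ e := hxnot x (by omega) e he.1
          have hxA : x ∉ insert y e := by
            rw [Finset.mem_insert]
            push_neg
            exact ⟨by omega, hxe⟩
          have hres := mem_shift hsh he.2 h1 hlt (show y ≤ n by omega)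
            (Finset.mem_insert_self y e) hxA
          rwa [Finset.erase_insert hye] at hres
      have hbd : ∀ x, 1 ≤ x → x ≤ N → φ x ≤ 2*t := by
        intro x _ _
        rw [hφ, ← hPcard]
        exact Finset.card_filter_le _ _
      obtain ⟨f, hfmono, hfprop⟩ := lemmaA t l N ht hl0 hN φ hmono hbd hsumφ
      have hf1 : ∀ k, 1 ≤ k → k ≤ t → 1 ≤ f k ∧ f k ≤ l+t :=
        fun k h1 h2 => ⟨(hfprop k h1 h2).1, (hfprop k h1 h2).2.1⟩
      set u : ℕ → ℕ := fun k => if k ≤ t then N+1 - f k else f (2*t+1-k) with hu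
      have hulow : ∀ k, t < k → k ≤ 2*t → 1 ≤ u k ∧ u k ≤ l+t := by
        intro k h1 h2
        rw [hu]; simp only [if_neg (show ¬ k ≤ t by omega)]
        exact hf1 _ (by omega) (by omega)
      have huhigh : ∀ k, 1 ≤ k → k ≤ t → l+t+1 ≤ u k ∧ u k ≤ N := by
        intro k h1 h2
        rw [hu]; simp only [if_pos h2]
        have := hf1 k h1 h2
        omega
      have huN : ∀ k, 1 ≤ k → k ≤ 2*t → 1 ≤ u k ∧ u k ≤ N := by
        intro k h1 h2
        by_cases hk : k ≤ t
        · have := huhigh k h1 hk; omega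
        · have := hulow k (by omega) h2; omega
      have huφ : ∀ k, 1 ≤ k → k ≤ 2*t → k ≤ φ (u k) := by
        intro k h1 h2
        by_cases hk : k ≤ t
        · rw [hu]; simp only [if_pos hk]
          exact (hfprop k h1 hk).2.2.1
        · rw [hu]; simp only [if_neg hk]
          have h3 := (hfprop (2*t+1-k) (by omega) (by omega)).2.2.2
          rwa [show 2*t+1-(2*t+1-k) = k by omega] at h3
      have huinj : ∀ k k', 1 ≤ k → k ≤ 2*t → 1 ≤ k' → k' ≤ 2*t → k ≠ k' → u k ≠ u k' := by
        intro k k' h1 h2 h1' h2' hkk'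
        by_cases hk : k ≤ t <;> by_cases hk' : k' ≤ t
        · rw [hu]; simp only [if_pos hk, if_pos hk']
          have ha := hf1 k h1 hk
          have hb := hf1 k' h1' hk'
          intro hc
          have : f k = f k' := by omega
          exact hkk' (hfmono.injective this)
        · have hA := huhigh k h1 hk
          have hB := hulow k' (by omega) h2'
          omega
        · have hA := hulow k (by omega) h2
          have hB := huhigh k' h1' hk'
          omega
        · rw [hu]; simp only [if_neg hk, if_neg hk']
          intro hc
          have := hfmono.injective hc
          omega
      -- greedy SDR
      set T : ℕ → Finset (Finset ℕ) := fun k => P.filter (fun e => insert (u k) e ∈ F) with hT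
      obtain ⟨g, hg1, hg2⟩ := greedy_sdr T (2*t) (fun k h1 h2 => huφ k h1 h2)
      have hgP : ∀ k, 1 ≤ k → k ≤ 2*t → g k ∈ P :=
        fun k h1 h2 => (Finset.mem_filter.mp (hg1 k h1 h2)).1
      have hgF : ∀ k, 1 ≤ k → k ≤ 2*t → insert (u k) (g k) ∈ F :=
        fun k h1 h2 => (Finset.mem_filter.mp (hg1 k h1 h2)).2
      have hgB : ∀ k, 1 ≤ k → k ≤ 2*t → (g k) ⊆ B₀ ∧ (g k).card = 2 :=
        fun k h1 h2 => hPpairs _ (hgP k h1 h2)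
      -- the three parts of a large matching
      set Jset := (Finset.Icc 1 (l+t)) \ ((Finset.Icc 1 t).image f) with hJ
      have hJmem : ∀ i ∈ Jset, (1 ≤ i ∧ i ≤ l+t) ∧ ∀ k, 1 ≤ k → k ≤ t → f k ≠ i := by
        intro i hi
        rw [hJ, Finset.mem_sdiff, Finset.mem_Icc] at hi
        exact ⟨hi.1, fun k hk1 hk2 hc =>
          hi.2 (Finset.mem_image.mpr ⟨k, by rw [Finset.mem_Icc]; omega, hc⟩)⟩
      have hJcard : Jset.card = l := by
        rw [hJ, Finset.card_sdiff_of_subset]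
        · rw [Finset.card_image_of_injOn (fun a _ b _ h => hfmono.injective h),
            Nat.card_Icc, Nat.card_Icc]
          omega
        · intro v hv
          obtain ⟨k, hk, rfl⟩ := Finset.mem_image.mp hv
          rw [Finset.mem_Icc] at hk ⊢
          have := hf1 k hk.1 hk.2
          omega
      set Mpair := Jset.image (fun i => ({i, N+1-i} : Finset ℕ)) with hMp
      set Mrain := (Finset.Icc 1 (2*t)).image (fun k => insert (u k) (g k)) with hMr
      set Mbig := Mpair ∪ Mrain ∪ Mstar with hMb
      -- shapes
      have hMpE : ∀ A ∈ Mpair, ∃ i ∈ Jset, A = ({i, N+1-i} : Finset ℕ) := by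
        intro A hA
        obtain ⟨i, hi, rfl⟩ := Finset.mem_image.mp hA
        exact ⟨i, hi, rfl⟩
      have hMrE : ∀ A ∈ Mrain, ∃ k, (1 ≤ k ∧ k ≤ 2*t) ∧ A = insert (u k) (g k) := by
        intro A hA
        obtain ⟨k, hk, rfl⟩ := Finset.mem_image.mp hA
        rw [Finset.mem_Icc] at hk
        exact ⟨k, hk, rfl⟩
      have hukgk : ∀ k, 1 ≤ k → k ≤ 2*t → u k ∉ g k := by
        intro k h1 h2 hc
        have := (hBlo _ ((hgB k h1 h2).1 hc)).1
        have := (huN k h1 h2).2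
        omega
      -- disjointness helpers
      have hPRdis : ∀ A ∈ Mpair, ∀ C ∈ Mrain, Disjoint A C := by
        intro A hA C hC
        obtain ⟨i, hi, rfl⟩ := hMpE A hA
        obtain ⟨k, hk, rfl⟩ := hMrE C hC
        obtain ⟨⟨hi1, hi2⟩, hif⟩ := hJmem i hi
        rw [Finset.disjoint_left]
        intro v hv hv'
        simp only [Finset.mem_insert, Finset.mem_singleton] at hv
        rcases Finset.mem_insert.mp hv' with hveq | hvg
        · -- v = u k
          subst hveq
          by_cases hkt : k ≤ t
          · have h8 : u k = N+1 - f k := by rw [hu]; simp only [if_pos hkt]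
            have h9 := hf1 k hk.1 hkt
            have h10 : f k ≠ i := hif k hk.1 hkt
            omega
          · have h8 : u k = f (2*t+1-k) := by rw [hu]; simp only [if_neg hkt]
            have h9 := hf1 (2*t+1-k) (by omega) (by omega)
            have h10 : f (2*t+1-k) ≠ i := hif (2*t+1-k) (by omega) (by omega)
            omega
        · -- v ∈ g k
          have := (hBlo _ ((hgB k hk.1 hk.2).1 hvg)).1
          omega
      have hPSdis : ∀ A ∈ Mpair, ∀ C ∈ Mstar, Disjoint A C := by
        intro A hA C hC
        obtain ⟨i, hi, rfl⟩ := hMpE A hA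
        obtain ⟨⟨hi1, hi2⟩, _⟩ := hJmem i hi
        rw [Finset.disjoint_left]
        intro v hv hv'
        simp only [Finset.mem_insert, Finset.mem_singleton] at hv
        have := (hMs3 C hC).2 hv'
        rw [Finset.mem_Icc] at this
        omega
      have hRSdis : ∀ A ∈ Mrain, ∀ C ∈ Mstar, Disjoint A C := by
        intro A hA C hC
        obtain ⟨k, hk, rfl⟩ := hMrE A hA
        rw [Finset.disjoint_left]
        intro v hv hv'
        have hvC := (hMs3 C hC).2 hv'
        rw [Finset.mem_Icc] at hvC
        rcases Finset.mem_insert.mp hv with rfl | hvg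
        · have := (huN k hk.1 hk.2).2; omega
        · have := (hBlo _ ((hgB k hk.1 hk.2).1 hvg)).1; omega
      have hPPdis : ∀ A ∈ Mpair, ∀ C ∈ Mpair, A ≠ C → Disjoint A C := by
        intro A hA C hC hAC
        obtain ⟨i, hi, rfl⟩ := hMpE A hA
        obtain ⟨j, hj, rfl⟩ := hMpE C hC
        obtain ⟨⟨hi1, hi2⟩, _⟩ := hJmem i hi
        obtain ⟨⟨hj1, hj2⟩, _⟩ := hJmem j hj
        have hij : i ≠ j := fun h => hAC (by rw [h])
        rw [Finset.disjoint_left]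
        intro v hv hv'
        simp only [Finset.mem_insert, Finset.mem_singleton] at hv hv'
        omega
      have hRRdis : ∀ A ∈ Mrain, ∀ C ∈ Mrain, A ≠ C → Disjoint A C := by
        intro A hA C hC hAC
        obtain ⟨k, hk, rfl⟩ := hMrE A hA
        obtain ⟨k', hk', rfl⟩ := hMrE C hC
        have hkk' : k ≠ k' := fun h => hAC (by rw [h])
        have hgne : g k ≠ g k' := hg2 k k' hk.1 hk.2 hk'.1 hk'.2 hkk'
        have hgdis : Disjoint (g k) (g k') :=
          hPdisj (Finset.mem_coe.mpr (hgP k hk.1 hk.2)) (Finset.mem_coe.mpr (hgP k' hk'.1 hk'.2)) hgne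
        rw [Finset.disjoint_left]
        intro v hv hv'
        rcases Finset.mem_insert.mp hv with rfl | hvg
        · rcases Finset.mem_insert.mp hv' with hvq | hvg'
          · exact huinj k k' hk.1 hk.2 hk'.1 hk'.2 hkk' hvq
          · have := (hBlo _ ((hgB k' hk'.1 hk'.2).1 hvg')).1
            have := (huN k hk.1 hk.2).2
            omega
        · rcases Finset.mem_insert.mp hv' with hvq | hvg'
          · have := (hBlo _ ((hgB k hk.1 hk.2).1 hvg)).1
            have := (huN k' hk'.1 hk'.2).2
            omega
          · exact (Finset.disjoint_left.mp hgdis hvg) hvg'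
      -- full pairwise disjointness
      have hdisjM : (Mbig : Set (Finset ℕ)).Pairwise (fun A B => Disjoint A B) := by
        intro A hA C hC hAC
        rw [hMb] at hA hC
        simp only [Finset.coe_union, Set.mem_union, Finset.mem_coe] at hA hC
        rcases hA with (hA | hA) | hA <;> rcases hC with (hC | hC) | hC
        · exact hPPdis A hA C hC hAC
        · exact hPRdis A hA C hC
        · exact hPSdis A hA C hC
        · exact (hPRdis C hC A hA).symm
        · exact hRRdis A hA C hC hAC
        · exact hRSdis A hA C hC
        · exact (hPSdis C hC A hA).symm
        · exact (hRSdis C hC A hA).symm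
        · exact hMsd (Finset.mem_coe.mpr hA) (Finset.mem_coe.mpr hC) hAC
      -- membership in F
      have hMbF : Mbig ⊆ F := by
        intro A hA
        rw [hMb] at hA
        rcases Finset.mem_union.mp hA with hA | hA
        · rcases Finset.mem_union.mp hA with hA | hA
          · obtain ⟨i, hi, rfl⟩ := hMpE A hA
            obtain ⟨⟨hi1, hi2⟩, _⟩ := hJmem i hi
            exact hpairsF i hi1 hi2
          · obtain ⟨k, hk, rfl⟩ := hMrE A hA
            exact hgF k hk.1 hk.2
        · exact hMsF hA
      -- cardinalities
      have hMp2 : ∀ A ∈ Mpair, A.card = 2 := by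
        intro A hA
        obtain ⟨i, hi, rfl⟩ := hMpE A hA
        obtain ⟨⟨hi1, hi2⟩, _⟩ := hJmem i hi
        exact Finset.card_pair (by omega)
      have hMr3 : ∀ A ∈ Mrain, A.card = 3 := by
        intro A hA
        obtain ⟨k, hk, rfl⟩ := hMrE A hA
        rw [Finset.card_insert_of_notMem (hukgk k hk.1 hk.2), (hgB k hk.1 hk.2).2]
      have hMpcard : Mpair.card = l := by
        rw [hMp, Finset.card_image_of_injOn, hJcard]
        intro i hi j hj hc
        obtain ⟨⟨hi1, hi2⟩, _⟩ := hJmem i hi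
        obtain ⟨⟨hj1, hj2⟩, _⟩ := hJmem j hj
        have hc' : ({i, N+1-i} : Finset ℕ) = {j, N+1-j} := hc
        have : i ∈ ({j, N+1-j} : Finset ℕ) := by
          rw [← hc']; exact Finset.mem_insert_self _ _
        simp only [Finset.mem_insert, Finset.mem_singleton] at this
        omega
      have hMrcard : Mrain.card = 2*t := by
        rw [hMr, Finset.card_image_of_injOn]
        · rw [Nat.card_Icc]; omega
        · intro k hka k' hka' hc
          have hk : 1 ≤ k ∧ k ≤ 2*t := by
            have : k ∈ Finset.Icc 1 (2*t) := hka
            rwa [Finset.mem_Icc] at this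
          have hk' : 1 ≤ k' ∧ k' ≤ 2*t := by
            have : k' ∈ Finset.Icc 1 (2*t) := hka'
            rwa [Finset.mem_Icc] at this
          by_contra hkk'
          have hc' : insert (u k) (g k) = insert (u k') (g k') := hc
          have h1 : u k' ∈ insert (u k) (g k) := by
            rw [hc']; exact Finset.mem_insert_self _ _
          rcases Finset.mem_insert.mp h1 with h | h
          · exact huinj k k' hk.1 hk.2 hk'.1 hk'.2 hkk' h.symm
          · have := (hBlo _ ((hgB k hk.1 hk.2).1 h)).1
            have := (huN k' hk'.1 hk'.2).2
            omega
      have hdisjPR : Disjoint Mpair Mrain := by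
        rw [Finset.disjoint_left]
        intro A hA hA'
        have := hMp2 A hA
        have := hMr3 A hA'
        omega
      have hdisjPRS : Disjoint (Mpair ∪ Mrain) Mstar := by
        rw [Finset.disjoint_left]
        intro A hA hA'
        rcases Finset.mem_union.mp hA with hA | hA
        · have h2 := hMp2 A hA
          have h3 := (hMs3 A hA').1
          omega
        · obtain ⟨k, hk, rfl⟩ := hMrE A hA
          have : u k ∈ insert (u k) (g k) := Finset.mem_insert_self _ _
          have hsub := (hMs3 _ hA').2 this
          rw [Finset.mem_Icc] at hsub
          have := (huN k hk.1 hk.2).2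
          omega
      have hMbcard : Mbig.card = s := by
        rw [hMb, Finset.card_union_of_disjoint hdisjPRS, Finset.card_union_of_disjoint hdisjPR,
          hMpcard, hMrcard, hMsc]
        omega
      have hge := matchingNumber_ge F Mbig hMbF hdisjM
      omega
    -- Step D: double counting
    have hsumL : ∑ x ∈ Finset.Icc 1 N, (L x).card ≤ (4*t-1) * (N*(2*t-1)) := by
      apply double_count B₀ t ht hcB (Finset.Icc 1 N) L
          (fun x _ => Finset.filter_subset _ _) (N*(2*t-1)) hper
    -- Step E: from links to missing triples
    have hfinal : N*(4*t-1) ≤ yF n F 3 := by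
      set S : ℕ → Finset (Finset ℕ) := fun x => (B₀.powersetCard 2) \ L x with hS
      have hpairs_card : (B₀.powersetCard 2).card = 2*t*(4*t-1) := by
        rw [Finset.card_powersetCard, hcB, Nat.choose_two_right]
        have : 4*t*(4*t-1) = 2*(2*t*(4*t-1)) := by ring
        omega
      have hLS : ∀ x, (S x).card + (L x).card = 2*t*(4*t-1) := by
        intro x
        rw [hS]
        rw [Finset.card_sdiff_add_card_eq_card (Finset.filter_subset _ _)]
        exact hpairs_card
      have hsumS : N*(2*t*(4*t-1)) = (∑ x ∈ Finset.Icc 1 N, (S x).card)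
          + ∑ x ∈ Finset.Icc 1 N, (L x).card := by
        rw [← Finset.sum_add_distrib]
        rw [Finset.sum_congr rfl (fun x _ => hLS x), Finset.sum_const, smul_eq_mul,
          Nat.card_Icc]
        have : N + 1 - 1 = N := by omega
        rw [this]
      have hident : N*(2*t*(4*t-1)) = (4*t-1)*(N*(2*t-1)) + N*(4*t-1) := by
        have e1 : 2*t = (2*t-1)+1 := by omega
        calc N*(2*t*(4*t-1)) = N*(((2*t-1)+1)*(4*t-1)) := by rw [← e1]
          _ = (4*t-1)*(N*(2*t-1)) + N*(4*t-1) := by ring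
      have hSsum : N*(4*t-1) ≤ ∑ x ∈ Finset.Icc 1 N, (S x).card := by
        linarith [hsumL, hsumS, hident]
      -- x is never an element of a pair of B₀
      have hxB : ∀ x, x ≤ N → ∀ e ∈ B₀.powersetCard 2, x ∉ e := by
        intro x hx e he hc
        rw [Finset.mem_powersetCard] at he
        have := (hBlo x (he.1 hc)).1
        omega
      -- the set of missing triples
      set Miss := (Finset.Icc 1 N).biUnion (fun x => (S x).image (fun e => insert x e))
        with hMiss
      have hScard2 : ∀ x, ∀ e ∈ S x, e ∈ B₀.powersetCard 2 := by
        intro x e he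
        rw [hS] at he
        exact (Finset.mem_sdiff.mp he).1
      have hMisscard : Miss.card = ∑ x ∈ Finset.Icc 1 N, (S x).card := by
        rw [hMiss, Finset.card_biUnion]
        · apply Finset.sum_congr rfl
          intro x hx
          rw [Finset.mem_Icc] at hx
          apply Finset.card_image_of_injOn
          intro e he e' he' hc
          have h1 : x ∉ e := hxB x hx.2 e (hScard2 x e he)
          have h2 : x ∉ e' := hxB x hx.2 e' (hScard2 x e' he')
          have hc' : insert x e = insert x e' := hc
          rw [← Finset.erase_insert h1, hc', Finset.erase_insert h2]
        · intro x hx x' hx' hxx'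
          rw [Finset.mem_coe, Finset.mem_Icc] at hx hx'
          rw [Function.onFun, Finset.disjoint_left]
          intro A hA hA'
          obtain ⟨e, he, rfl⟩ := Finset.mem_image.mp hA
          obtain ⟨e', he', hc⟩ := Finset.mem_image.mp hA'
          have hx'mem : x' ∈ insert x e := by rw [← hc]; exact Finset.mem_insert_self _ _
          rcases Finset.mem_insert.mp hx'mem with h | h
          · exact hxx' h.symm
          · exact hxB x' hx'.2 e (hScard2 x e he) h
      have hMsub : Miss ⊆ (ground n).powersetCard 3 := by
        intro A hA
        rw [hMiss, Finset.mem_biUnion] at hA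
        obtain ⟨x, hx, hA⟩ := hA
        rw [Finset.mem_Icc] at hx
        obtain ⟨e, he, rfl⟩ := Finset.mem_image.mp hA
        have hepairs := hScard2 x e he
        rw [Finset.mem_powersetCard] at hepairs ⊢
        constructor
        · intro v hv
          rcases Finset.mem_insert.mp hv with rfl | hv
          · unfold ground; rw [Finset.mem_Icc]; omega
          · have := hBlo v (hepairs.1 hv)
            unfold ground; rw [Finset.mem_Icc]; omega
        · have hxe : x ∉ e := hxB x hx.2 e (hScard2 x e he)
          rw [Finset.card_insert_of_notMem hxe, hepairs.2]
      have hMnotF : ∀ A ∈ Miss, A ∉ F := by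
        intro A hA
        rw [hMiss, Finset.mem_biUnion] at hA
        obtain ⟨x, hx, hA⟩ := hA
        obtain ⟨e, he, rfl⟩ := Finset.mem_image.mp hA
        rw [hS, Finset.mem_sdiff] at he
        intro hc
        exact he.2 (by rw [hL, Finset.mem_filter]; exact ⟨he.1, hc⟩)
      have hdisj : Disjoint (layer n F 3) Miss := by
        rw [Finset.disjoint_left]
        intro A hA hA'
        have : A ∈ F := (Finset.mem_inter.mp hA).1
        exact hMnotF A hA' this
      have hT3 : ((ground n).powersetCard 3).card = n.choose 3 := by
        rw [Finset.card_powersetCard]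
        unfold ground
        rw [Nat.card_Icc, show n + 1 - 1 = n by omega]
      have hcount : (layer n F 3).card + Miss.card ≤ n.choose 3 := by
        rw [← Finset.card_union_of_disjoint hdisj, ← hT3]
        apply Finset.card_le_card
        apply Finset.union_subset
        · exact Finset.inter_subset_right
        · exact hMsub
      unfold yF
      omega
    -- Conclusion
    have hcast : ((N*(4*t-1) : ℕ) : ℤ) ≤ ((yF n F 3 : ℕ) : ℤ) := by exact_mod_cast hfinal
    have h4t : ((4*t-1 : ℕ) : ℤ) = 4*(t:ℤ)-1 := by push_cast [show 1 ≤ 4*t by omega]; ring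
    have hNc : ((N:ℕ):ℤ) = 2*(l:ℤ)+2*(t:ℤ) := by rw [hN]; push_cast; ring
    push_cast [h4t, hNc] at hcast
    push_cast
    nlinarith [hcast]
end

section
/- Let s,ℓ be positive integers with n=3s-ℓ, and let F ⊆ 2^[n] be a shifted family with ν(F) < s. Let d = d(F) ≥ 2 be even. Then for every x ∈ [2, 2ℓ+d−1] the family F ∩ (([2ℓ+d−1] \ {x}) choose 2) contains an (ℓ+(d−2)/2)-matching. -/
open Finset

lemma shift_mem {n : ℕ} {F : Finset (Finset ℕ)} (hsh : IsShifted n F) {A : Finset ℕ}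
    (hA : A ∈ F) {i j : ℕ} (h1 : 1 ≤ i) (h2 : i < j) (h3 : j ≤ n) :
    shiftSet i j A ∈ F := by
  rw [← hsh i j h1 h2 h3]
  unfold shiftFam
  exact Finset.mem_union_left _ (Finset.mem_image_of_mem _ hA)

lemma shiftSet_pair (u v w : ℕ) (huv : u ≠ v) (hwv : w < v) (hwu : w ≠ u) :
    shiftSet w v ({u, v} : Finset ℕ) = {u, w} := by
  unfold shiftSet
  rw [if_pos]
  · have h : ({u, v} : Finset ℕ).erase v = {u} := by
      ext a
      simp only [Finset.mem_erase, Finset.mem_insert, Finset.mem_singleton]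
      constructor
      · rintro ⟨h1, h2 | h2⟩
        · exact h2
        · exact absurd h2 h1
      · rintro rfl; exact ⟨huv, Or.inl rfl⟩
    rw [h]
    exact (Finset.pair_comm u w).symm
  · constructor
    · simp
    · simp only [Finset.mem_insert, Finset.mem_singleton]
      push_neg
      exact ⟨hwu, Nat.ne_of_lt hwv⟩

lemma pair_dom {n : ℕ} {F : Finset (Finset ℕ)} (hsh : IsShifted n F) {a0 b0 a b : ℕ}
    (h0 : ({a0, b0} : Finset ℕ) ∈ F) (hab0 : a0 < b0) (hb0n : b0 ≤ n)
    (ha1 : 1 ≤ a) (haa0 : a ≤ a0) (hab : a < b) (hbb0 : b ≤ b0) :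
    ({a, b} : Finset ℕ) ∈ F := by
  by_cases hba0 : b = a0
  · -- a < b = a0 < b0 : one shift replacing b0 by a
    have hab0' : a < b0 := by omega
    have h1 := shift_mem hsh h0 ha1 hab0' hb0n
    rw [shiftSet_pair a0 b0 a (Nat.ne_of_lt hab0) hab0' (by omega)] at h1
    rw [hba0, Finset.pair_comm]
    exact h1
  · have h1 : ({a0, b} : Finset ℕ) ∈ F := by
      by_cases hbb : b = b0
      · rw [hbb]; exact h0
      · have hb1 : 1 ≤ b := by omega
        have hbb0' : b < b0 := by omega
        have h2 := shift_mem hsh h0 hb1 hbb0' hb0n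
        rwa [shiftSet_pair a0 b0 b (Nat.ne_of_lt hab0) hbb0' hba0] at h2
    by_cases haa : a = a0
    · rw [haa]; exact h1
    · have haa0' : a < a0 := by omega
      rw [Finset.pair_comm] at h1
      have h2 := shift_mem hsh h1 ha1 haa0' (by omega)
      rwa [shiftSet_pair b a0 a hba0 haa0' (Nat.ne_of_lt hab), Finset.pair_comm] at h2

lemma le_matchingNumber {F' M : Finset (Finset ℕ)} (hM : M ⊆ F')
    (hp : (M : Set (Finset ℕ)).Pairwise fun A B => Disjoint A B) :
    M.card ≤ matchingNumber F' := by
  classical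
  unfold matchingNumber
  apply Finset.le_sup (f := Finset.card)
  simp only [Finset.mem_filter, Finset.mem_powerset]
  exact ⟨hM, hp⟩

lemma matching_of_pairs (F' : Finset (Finset ℕ)) (I : Finset ℕ) (g : ℕ → ℕ)
    (hlt : ∀ j ∈ I, j < g j)
    (hinj : ∀ i ∈ I, ∀ j ∈ I, g i = g j → i = j)
    (hne : ∀ i ∈ I, ∀ j ∈ I, i ≠ g j)
    (hmem : ∀ j ∈ I, ({j, g j} : Finset ℕ) ∈ F') :
    I.card ≤ matchingNumber F' := by
  classical
  have hcard : (I.image fun j => ({j, g j} : Finset ℕ)).card = I.card := by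
    apply Finset.card_image_of_injOn
    intro i hi j hj hij
    dsimp only at hij
    have h : i ∈ ({j, g j} : Finset ℕ) := by rw [← hij]; simp
    rcases Finset.mem_insert.mp h with h' | h'
    · exact h'
    · exact absurd (Finset.mem_singleton.mp h') (hne i hi j hj)
  rw [← hcard]
  apply le_matchingNumber
  · intro A hA
    obtain ⟨j, hj, rfl⟩ := Finset.mem_image.mp hA
    exact hmem j hj
  · intro A hA B hB hAB
    simp only [Finset.coe_image, Set.mem_image, Finset.mem_coe] at hA hB
    obtain ⟨i, hi, rfl⟩ := hA
    obtain ⟨j, hj, rfl⟩ := hB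
    have hij : i ≠ j := by rintro rfl; exact hAB rfl
    rw [Finset.disjoint_left]
    intro a ha hb
    simp only [Finset.mem_insert, Finset.mem_singleton] at ha hb
    rcases ha with rfl | rfl <;> rcases hb with h | h
    · exact hij h
    · exact hne a hi j hj h
    · exact hne j hj i hi h.symm
    · exact hij (hinj i hi j hj h)

theorem stmt_14 (n s l d : ℕ) (hs0 : 0 < s) (hl0 : 0 < l) (hn : n + l = 3 * s)
    (F : Finset (Finset ℕ)) (hF : ∀ A ∈ F, A ⊆ ground n) (hsh : IsShifted n F)
    (hnu : matchingNumber F < s)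
    (hdF : dF l F = d) (hd : Even d) (hd2 : 2 ≤ d) :
    ∀ x ∈ Finset.Icc 2 (2 * l + d - 1),
      l + (d - 2) / 2 ≤
        matchingNumber (F ∩ ((Finset.Icc 1 (2 * l + d - 1)).erase x).powersetCard 2) := by
  have hd0 : d % 2 = 0 := Nat.even_iff.mp hd
  -- d - 1 does not satisfy DCond
  have hnot : ¬ DCond l F (d - 1) := by
    intro h
    have h1 : sInf {d' : ℕ | DCond l F d'} ≤ d - 1 := Nat.sInf_le h
    unfold dF at hdF
    omega
  have hodd : Odd (d - 1) := Nat.Even.sub_odd (by omega) hd odd_one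
  unfold DCond at hnot
  push_neg at hnot
  have hK := hnot.2 hodd
  set m := 2 * l + d - 1 with hm
  set c := l + d / 2 with hc
  have hc2 : 2 ≤ c := by omega
  have hmc : m = 2 * c - 1 := by omega
  have hK1 : ({1, m} : Finset ℕ) ∈ F := by
    have h := hK.1
    rwa [show 2 * l + (d - 1) = m by omega] at h
  have hK2 : ∀ i : ℕ, 3 ≤ i → i ≤ c → ({i, m + 2 - i} : Finset ℕ) ∈ F := by
    intro i h3 hic
    have h := hK.2 i (Finset.mem_Icc.mpr ⟨h3, by omega⟩)
    rwa [show 2 * l + (d - 1) + 2 - i = m + 2 - i by omega] at h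
  have hmn : m ≤ n := by
    have h := hF _ hK1 (by simp : m ∈ ({1, m} : Finset ℕ))
    simpa [ground, Finset.mem_Icc] using (Finset.mem_Icc.mp (by simpa [ground] using h)).2
  have hm3 : 3 ≤ m := by omega
  -- the key membership lemma
  have pairF : ∀ a b : ℕ, 1 ≤ a → a < b →
      ((a = 1 ∧ b ≤ m) ∨ (2 ≤ a ∧ b + 1 ≤ m ∧ a + b ≤ m + 2)) →
      ({a, b} : Finset ℕ) ∈ F := by
    intro a b ha1 hab hcase
    rcases hcase with ⟨rfl, hbm⟩ | ⟨ha2, hbm, hsum⟩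
    · exact pair_dom hsh hK1 (by omega) hmn ha1 le_rfl hab hbm
    · rcases Nat.lt_or_ge a 3 with ha3 | ha3
      · -- a = 2
        have hc3 : 3 ≤ c := by omega
        have h3 := hK2 3 le_rfl hc3
        rw [show m + 2 - 3 = m - 1 by omega] at h3
        exact pair_dom hsh h3 (by omega) (by omega) ha1 (by omega) hab (by omega)
      · have hac : a ≤ c := by omega
        have h := hK2 a ha3 hac
        exact pair_dom hsh h (by omega) (by omega) ha1 le_rfl hab (by omega)
  intro x hx
  rw [Finset.mem_Icc] at hx
  obtain ⟨hx2, hxm⟩ := hx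
  have hgoal : l + (d - 2) / 2 = c - 1 := by omega
  rw [hgoal]
  rcases Nat.lt_or_ge c x with hcx | hxc
  · rcases Nat.lt_or_ge x m with hxm' | hxm'
    · -- Case C : c < x < m
      have hx' : 2 ≤ m + 1 - x ∧ m + 1 - x ≤ c - 1 := by omega
      have hcalc : ((Finset.Icc 1 (c - 1)).card = c - 1) := by
        rw [Nat.card_Icc]; omega
      rw [← hcalc]
      apply matching_of_pairs _ _
        (fun j => if j = 1 then m else if j = m + 1 - x then c else m + 1 - j)
      · intro j hj
        rw [Finset.mem_Icc] at hj
        split_ifs <;> omega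
      · intro i hi j hj h
        rw [Finset.mem_Icc] at hi hj
        split_ifs at h <;> omega
      · intro i hi j hj
        rw [Finset.mem_Icc] at hi hj
        split_ifs <;> omega
      · intro j hj
        rw [Finset.mem_Icc] at hj
        rw [Finset.mem_inter]
        constructor
        · apply pairF
          · omega
          · split_ifs <;> omega
          · split_ifs <;> omega
        · rw [Finset.mem_powersetCard]
          constructor
          · intro a ha
            simp only [Finset.mem_insert, Finset.mem_singleton] at ha
            rw [Finset.mem_erase, Finset.mem_Icc]
            rcases ha with rfl | rfl
            · exact ⟨by omega, by omega, by omega⟩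
            · split_ifs <;> exact ⟨by omega, by omega, by omega⟩
          · exact Finset.card_pair (by split_ifs <;> omega)
    · -- Case A : x = m
      have hxm'' : x = m := by omega
      subst hxm''
      have hcalc : ((Finset.Icc 1 (c - 1)).card = c - 1) := by
        rw [Nat.card_Icc]; omega
      rw [← hcalc]
      apply matching_of_pairs _ _ (fun j => m - j)
      · intro j hj; rw [Finset.mem_Icc] at hj; omega
      · intro i hi j hj h
        rw [Finset.mem_Icc] at hi hj; omega
      · intro i hi j hj
        rw [Finset.mem_Icc] at hi hj; omega
      · intro j hj
        rw [Finset.mem_Icc] at hj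
        rw [Finset.mem_inter]
        constructor
        · apply pairF
          · omega
          · omega
          · omega
        · rw [Finset.mem_powersetCard]
          constructor
          · intro a ha
            simp only [Finset.mem_insert, Finset.mem_singleton] at ha
            rw [Finset.mem_erase, Finset.mem_Icc]
            rcases ha with rfl | rfl
            · exact ⟨by omega, by omega, by omega⟩
            · exact ⟨by omega, by omega, by omega⟩
          · exact Finset.card_pair (by omega)
  · -- Case B : 2 ≤ x ≤ c
    have hcalc : (((Finset.Icc 1 c).erase x).card = c - 1) := by
      rw [Finset.card_erase_of_mem (Finset.mem_Icc.mpr ⟨by omega, hxc⟩), Nat.card_Icc]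
      omega
    rw [← hcalc]
    apply matching_of_pairs _ _
      (fun j => if j = 1 then m else if j < x then m + 1 - j else m + 2 - j)
    · intro j hj
      rw [Finset.mem_erase, Finset.mem_Icc] at hj
      split_ifs <;> omega
    · intro i hi j hj h
      rw [Finset.mem_erase, Finset.mem_Icc] at hi hj
      split_ifs at h <;> omega
    · intro i hi j hj
      rw [Finset.mem_erase, Finset.mem_Icc] at hi hj
      split_ifs <;> omega
    · intro j hj
      rw [Finset.mem_erase, Finset.mem_Icc] at hj
      rw [Finset.mem_inter]
      constructor
      · apply pairF
        · omega
        · split_ifs <;> omega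
        · split_ifs <;> omega
      · rw [Finset.mem_powersetCard]
        constructor
        · intro a ha
          simp only [Finset.mem_insert, Finset.mem_singleton] at ha
          rw [Finset.mem_erase, Finset.mem_Icc]
          rcases ha with rfl | rfl
          · exact ⟨by omega, by omega, by omega⟩
          · split_ifs <;> exact ⟨by omega, by omega, by omega⟩
        · exact Finset.card_pair (by split_ifs <;> omega)
end
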